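/- In the GE model with Hamming bonus, for every n and every T ≥ 2 there exists a deterministic online algorithm that is (3 + 1/(T−1))-competitive: on every general-evolution Hamming-bonus instance with T time steps, the value of its output sequence is at least OPT/(3 + 1/(T−1)). -/

import Mathlib

/-- The value of a solution sequence under the Hamming bonus: total profit plus,
for each pair of consecutive steps, `n` minus the Hamming distance
(cardinality of the symmetric difference) of the two solutions. -/
noncomputable def hamVal (n T : ℕ) (p : ℕ → Finset (Fin n) → ℝ)
    (S : ℕ → Finset (Fin n)) : ℝ :=
  (∑ t ∈ Finset.range T, p t (S t)) +
    ∑ t ∈ Finset.range (T - 1),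
      ((n : ℝ) - (((S t \ S (t + 1)) ∪ (S (t + 1) \ S t)).card : ℝ))

/-- A valid multistage instance: the empty set is feasible at every time step and
profits are nonnegative. -/
def ValidInstance (n T : ℕ) (F : ℕ → Set (Finset (Fin n)))
    (p : ℕ → Finset (Fin n) → ℝ) : Prop :=
  (∀ t, t < T → (∅ : Finset (Fin n)) ∈ F t) ∧ ∀ t, t < T → ∀ S, 0 ≤ p t S

/-- A solution sequence: feasible at every time step. -/
def IsSol (n T : ℕ) (F : ℕ → Set (Finset (Fin n))) (S : ℕ → Finset (Fin n)) : Prop :=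
  ∀ t, t < T → S t ∈ F t

/-- A deterministic online algorithm: the solution output at time `t < T` depends
only on the data `(F_s, p_s)` revealed up to time `s ≤ t`. -/
def IsOnline (n T : ℕ)
    (alg : (ℕ → Set (Finset (Fin n))) → (ℕ → Finset (Fin n) → ℝ) → ℕ → Finset (Fin n)) :
    Prop :=
  ∀ F p F' p', ∀ t, t < T →
    (∀ s, s ≤ t → F s = F' s ∧ p s = p' s) → alg F p t = alg F' p' t


namespace Stmt5Aux

noncomputable def pick {n : ℕ} (Fam : Set (Finset (Fin n))) (f : Finset (Fin n) → ℝ) :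
    Finset (Fin n) :=
  open Classical in if h : ∃ S, S ∈ Fam ∧ ∀ Y ∈ Fam, f Y ≤ f S then h.choose else ∅

lemma pick_spec {n : ℕ} {Fam : Set (Finset (Fin n))} (f : Finset (Fin n) → ℝ)
    (h0 : (∅ : Finset (Fin n)) ∈ Fam) :
    pick Fam f ∈ Fam ∧ ∀ Y ∈ Fam, f Y ≤ f (pick Fam f) := by
  obtain ⟨b, hb, hmax⟩ := Set.exists_max_image Fam f (Set.toFinite _) ⟨∅, h0⟩
  have h : ∃ S, S ∈ Fam ∧ ∀ Y ∈ Fam, f Y ≤ f S := ⟨b, hb, hmax⟩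
  rw [pick, dif_pos h]
  exact ⟨h.choose_spec.1, h.choose_spec.2⟩

def dH {n : ℕ} (a b : Finset (Fin n)) : ℕ := ((a \ b) ∪ (b \ a)).card

lemma dH_comm {n : ℕ} (a b : Finset (Fin n)) : dH a b = dH b a := by
  rw [dH, dH, Finset.union_comm]

lemma dH_empty_left {n : ℕ} (a : Finset (Fin n)) : dH ∅ a = a.card := by simp [dH]

lemma dH_le {n : ℕ} (a b : Finset (Fin n)) : dH a b ≤ n := by
  have := Finset.card_le_univ ((a \ b) ∪ (b \ a))
  simpa [dH] using this

lemma card_le {n : ℕ} (a : Finset (Fin n)) : a.card ≤ n := by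
  have := Finset.card_le_univ a
  simpa using this

noncomputable def myAlg (n : ℕ) (F : ℕ → Set (Finset (Fin n)))
    (p : ℕ → Finset (Fin n) → ℝ) : ℕ → Finset (Fin n)
  | 0 => pick (F 0) (fun S => p 0 S - (S.card : ℝ))
  | (t+1) => pick (F (t+1))
      (fun S => p (t+1) S - (dH S (myAlg n F p t) : ℝ) - (S.card : ℝ))

lemma myAlg_online (n : ℕ) (F F' : ℕ → Set (Finset (Fin n)))
    (p p' : ℕ → Finset (Fin n) → ℝ) :
    ∀ t, (∀ s, s ≤ t → F s = F' s ∧ p s = p' s) → myAlg n F p t = myAlg n F' p' t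
  | 0, h => by rw [myAlg, myAlg, (h 0 le_rfl).1, (h 0 le_rfl).2]
  | (t+1), h => by
      rw [myAlg, myAlg, (h (t+1) le_rfl).1, (h (t+1) le_rfl).2,
        myAlg_online n F F' p p' t (fun s hs => h s (hs.trans (Nat.le_succ t)))]

end Stmt5Aux

/-- In the GE model with Hamming bonus, for every `n` and every `T ≥ 2` there is a
deterministic online algorithm that is `(3 + 1/(T-1))`-competitive: on every valid
general-evolution instance its output is feasible and has value at least
`OPT / (3 + 1/(T-1))`. -/
theorem stmt5 (n T : ℕ) (hT : 2 ≤ T) :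
    ∃ alg : (ℕ → Set (Finset (Fin n))) → (ℕ → Finset (Fin n) → ℝ) → ℕ → Finset (Fin n),
      IsOnline n T alg ∧
      ∀ F p, ValidInstance n T F p →
        (∀ t, t < T → alg F p t ∈ F t) ∧
        ∀ S : ℕ → Finset (Fin n), IsSol n T F S →
          hamVal n T p S / (3 + 1 / ((T : ℝ) - 1)) ≤ hamVal n T p (alg F p) := by

  obtain ⟨K, rfl⟩ : ∃ K, T = K + 1 := ⟨T - 1, by omega⟩
  have hK1 : 1 ≤ K := by omega
  refine ⟨fun F p => Stmt5Aux.myAlg n F p, ?_, ?_⟩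
  · intro F p F' p' t ht h
    exact Stmt5Aux.myAlg_online n F F' p p' t h
  intro F p hV
  open Stmt5Aux in
  set A := Stmt5Aux.myAlg n F p with hAdef
  have hfeas : ∀ t, t < K + 1 → A t ∈ F t := by
    intro t ht
    cases t with
    | zero => exact (pick_spec _ (hV.1 0 ht)).1
    | succ s => exact (pick_spec _ (hV.1 (s+1) ht)).1
  refine ⟨hfeas, ?_⟩
  intro S hS
  have opt0 : ∀ Y ∈ F 0, p 0 Y - (Y.card : ℝ) ≤ p 0 (A 0) - ((A 0).card : ℝ) := by
    intro Y hY
    exact (pick_spec (fun S => p 0 S - (S.card : ℝ)) (hV.1 0 (by omega))).2 Y hY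
  have optS : ∀ t, t + 1 < K + 1 → ∀ Y ∈ F (t+1),
      p (t+1) Y - (dH Y (A t) : ℝ) - (Y.card : ℝ) ≤
        p (t+1) (A (t+1)) - (dH (A (t+1)) (A t) : ℝ) - ((A (t+1)).card : ℝ) := by
    intro t ht Y hY
    exact (pick_spec (fun S => p (t+1) S - (dH S (A t) : ℝ) - (S.card : ℝ))
      (hV.1 (t+1) ht)).2 Y hY
  set c : ℕ → ℝ := fun t => ((A t).card : ℝ) with hc
  set g : ℕ → ℝ := fun t => p (t+1) (A (t+1)) + ((n : ℝ) - (dH (A t) (A (t+1)) : ℝ)) with hg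
  have hcnonneg : ∀ t, 0 ≤ c t := fun t => Nat.cast_nonneg _
  -- E∅
  have Eempty : ∀ t, t < K → ((n : ℝ) - c t) + c (t+1) ≤ g t := by
    intro t ht
    have h1 := optS t (by omega) ∅ (hV.1 (t+1) (by omega))
    have h2 : 0 ≤ p (t+1) ∅ := hV.2 (t+1) (by omega) ∅
    have h3 : (dH (∅ : Finset (Fin n)) (A t) : ℝ) = c t := by
      rw [dH_empty_left]
    have h4 : (dH (A (t+1)) (A t) : ℝ) = (dH (A t) (A (t+1)) : ℝ) := by
      rw [dH_comm]
    simp only [Finset.card_empty, Nat.cast_zero] at h1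
    rw [h3, h4] at h1
    simp only [hg, hc] at *
    linarith
  -- E vs OPT
  have Eopt : ∀ t, t < K →
      p (t+1) (S (t+1)) + c (t+1) - ((S (t+1)).card : ℝ) ≤ g t := by
    intro t ht
    have h1 := optS t (by omega) (S (t+1)) (hS (t+1) (by omega))
    have h4 : (dH (A (t+1)) (A t) : ℝ) = (dH (A t) (A (t+1)) : ℝ) := by
      rw [dH_comm]
    have h5 : (dH (S (t+1)) (A t) : ℝ) ≤ n := by exact_mod_cast dH_le _ _
    rw [h4] at h1
    simp only [hg, hc] at *
    linarith
  have E0 : c 0 ≤ p 0 (A 0) := by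
    have h1 := opt0 ∅ (hV.1 0 (by omega))
    have h2 : 0 ≤ p 0 ∅ := hV.2 0 (by omega) ∅
    simp only [Finset.card_empty, Nat.cast_zero] at h1
    simp only [hc] at *
    linarith
  have E0opt : p 0 (S 0) + c 0 - ((S 0).card : ℝ) ≤ p 0 (A 0) := by
    have h1 := opt0 (S 0) (hS 0 (by omega))
    have h2 := hcnonneg 0
    simp only [hc] at *
    linarith
  -- decomposition of ALG value
  have h1A : ∑ t ∈ Finset.range (K+1), p t (A t)
      = (∑ t ∈ Finset.range K, p (t+1) (A (t+1))) + p 0 (A 0) :=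
    Finset.sum_range_succ' (fun t => p t (A t)) K
  have hbonusA : ∑ t ∈ Finset.range K,
      ((n : ℝ) - (((A t \ A (t + 1)) ∪ (A (t + 1) \ A t)).card : ℝ))
      = ∑ t ∈ Finset.range K, ((n : ℝ) - (dH (A t) (A (t+1)) : ℝ)) := rfl
  have h3A : ∑ t ∈ Finset.range K, g t
      = (∑ t ∈ Finset.range K, p (t+1) (A (t+1)))
        + ∑ t ∈ Finset.range K, ((n : ℝ) - (dH (A t) (A (t+1)) : ℝ)) := by
    simp only [hg]
    rw [Finset.sum_add_distrib]
  have hALG : hamVal n (K+1) p A = p 0 (A 0) + ∑ t ∈ Finset.range K, g t := by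
    simp only [hamVal, Nat.add_sub_cancel]
    rw [h1A, hbonusA, h3A]
    ring
  -- L1
  have L1 : (K : ℝ) * n ≤ p 0 (A 0) + ∑ t ∈ Finset.range K, g t := by
    have hsum : ∑ t ∈ Finset.range K, (((n : ℝ) - c t) + c (t+1))
        ≤ ∑ t ∈ Finset.range K, g t :=
      Finset.sum_le_sum (fun t ht => Eempty t (Finset.mem_range.1 ht))
    have hval : ∑ t ∈ Finset.range K, (((n : ℝ) - c t) + c (t+1))
        = (K : ℝ) * n + (c K - c 0) := by
      have he : ∀ t ∈ Finset.range K, ((n : ℝ) - c t) + c (t+1)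
          = (n : ℝ) + (c (t+1) - c t) := by intro t _; ring
      rw [Finset.sum_congr rfl he, Finset.sum_add_distrib,
        Finset.sum_range_sub (fun t => c t), Finset.sum_const, Finset.card_range,
        nsmul_eq_mul]
    linarith [hcnonneg 0, hcnonneg K, E0]
  -- L2
  have L2 : (∑ t ∈ Finset.range (K+1), p t (S t)) - (n : ℝ)
      ≤ 2 * (p 0 (A 0) + ∑ t ∈ Finset.range K, g t) := by
    have hterm : ∀ t, t < K →
        p (t+1) (S (t+1)) + (2 * c (t+1) - c t) ≤ 2 * g t := by
      intro t ht
      have h1 := Eempty t ht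
      have h2 := Eopt t ht
      have h3 : ((S (t+1)).card : ℝ) ≤ n := by exact_mod_cast card_le _
      linarith
    have hsum : ∑ t ∈ Finset.range K, (p (t+1) (S (t+1)) + (2 * c (t+1) - c t))
        ≤ ∑ t ∈ Finset.range K, 2 * g t :=
      Finset.sum_le_sum (fun t ht => hterm t (Finset.mem_range.1 ht))
    have hval : ∑ t ∈ Finset.range K, (p (t+1) (S (t+1)) + (2 * c (t+1) - c t))
        = (∑ t ∈ Finset.range K, p (t+1) (S (t+1)))
          + ((c K - c 0 + ∑ t ∈ Finset.range K, c (t+1))) := by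
      have he : ∀ t ∈ Finset.range K, p (t+1) (S (t+1)) + (2 * c (t+1) - c t)
          = p (t+1) (S (t+1)) + ((c (t+1) - c t) + c (t+1)) := by intro t _; ring
      rw [Finset.sum_congr rfl he, Finset.sum_add_distrib, Finset.sum_add_distrib,
        Finset.sum_range_sub (fun t => c t)]
    have hP : ∑ t ∈ Finset.range (K+1), p t (S t)
        = (∑ t ∈ Finset.range K, p (t+1) (S (t+1))) + p 0 (S 0) :=
      Finset.sum_range_succ' (fun t => p t (S t)) K
    have h2g : ∑ t ∈ Finset.range K, 2 * g t = 2 * ∑ t ∈ Finset.range K, g t := by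
      rw [Finset.mul_sum]
    have hcsum : 0 ≤ ∑ t ∈ Finset.range K, c (t+1) :=
      Finset.sum_nonneg (fun t _ => hcnonneg (t+1))
    have hS0 : ((S 0).card : ℝ) ≤ n := by exact_mod_cast card_le _
    rw [hP]
    linarith [hcnonneg 0, hcnonneg K, E0opt]
  -- OPT bonus bound
  have L3 : ∑ t ∈ Finset.range K,
      ((n : ℝ) - (((S t \ S (t + 1)) ∪ (S (t + 1) \ S t)).card : ℝ)) ≤ (K : ℝ) * n := by
    calc ∑ t ∈ Finset.range K, ((n : ℝ) - (((S t \ S (t+1)) ∪ (S (t+1) \ S t)).card : ℝ))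
        ≤ ∑ t ∈ Finset.range K, (n : ℝ) := by
          refine Finset.sum_le_sum (fun t _ => ?_)
          have h0 : (0 : ℝ) ≤ (((S t \ S (t+1)) ∪ (S (t+1) \ S t)).card : ℝ) :=
            Nat.cast_nonneg _
          linarith
      _ = (K : ℝ) * n := by rw [Finset.sum_const, Finset.card_range, nsmul_eq_mul]
  -- assemble
  have hKpos : (0 : ℝ) < (K : ℝ) := by exact_mod_cast hK1
  have hTK : (((K + 1 : ℕ) : ℝ)) - 1 = (K : ℝ) := by push_cast; ring
  have halpha : (0 : ℝ) < 3 + 1 / (((K + 1 : ℕ) : ℝ) - 1) := by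
    rw [hTK]; positivity
  rw [div_le_iff₀ halpha, hTK]
  have hdiv : (n : ℝ) ≤ (p 0 (A 0) + ∑ t ∈ Finset.range K, g t) / K :=
    (le_div_iff₀ hKpos).2 (by linarith [L1])
  have hexp : (p 0 (A 0) + ∑ t ∈ Finset.range K, g t) * (3 + 1 / (K : ℝ))
      = 3 * (p 0 (A 0) + ∑ t ∈ Finset.range K, g t)
        + (p 0 (A 0) + ∑ t ∈ Finset.range K, g t) / (K : ℝ) := by
    field_simp
  have hham : hamVal n (K+1) p S = (∑ t ∈ Finset.range (K+1), p t (S t))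
      + ∑ t ∈ Finset.range K,
        ((n : ℝ) - (((S t \ S (t + 1)) ∪ (S (t + 1) \ S t)).card : ℝ)) := by
    simp only [hamVal, Nat.add_sub_cancel]
  rw [hham, hALG]
  linarith [L1, L2, L3, hdiv, hexp]
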